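/- Let (X,κ) be a connected digital image and r ∈ X a point such that X \ {r} is disconnected. If f: (X,κ) → Y ⊆ (ℤ,c₁) is a shy map, then f equals the constant value f(r) on all but at most two of the connected components of X \ {r}. -/

import Mathlib

/-- A subset `A` is connected under adjacency `κ` if any two of its points are
joined by a path within `A` whose consecutive points are `κ`-adjacent. -/
def DConn {X : Type*} (κ : X → X → Prop) (A : Set X) : Prop :=
  ∀ a ∈ A, ∀ b ∈ A,
    Relation.ReflTransGen (fun u v => κ u v ∧ u ∈ A ∧ v ∈ A) a b

/-- `f` is digitally continuous if images of connected sets are connected. -/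
def DCont {X Y : Type*} (κ : X → X → Prop) (lam : Y → Y → Prop) (f : X → Y) : Prop :=
  ∀ A : Set X, DConn κ A → DConn lam (f '' A)

/-- `f` is shy: a continuous surjection with connected point preimages and
connected preimages of adjacent pairs. -/
def DShy {X Y : Type*} (κ : X → X → Prop) (lam : Y → Y → Prop) (f : X → Y) : Prop :=
  DCont κ lam f ∧ Function.Surjective f ∧
    (∀ y : Y, DConn κ (f ⁻¹' {y})) ∧
    ∀ y₀ y₁ : Y, lam y₀ y₁ → DConn κ (f ⁻¹' {y₀, y₁})

/-- Shyness of `f` viewed as a map from the subset `S` onto the subset `T`. -/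
def DShyOn {X Y : Type*} (κ : X → X → Prop) (lam : Y → Y → Prop)
    (f : X → Y) (S : Set X) (T : Set Y) : Prop :=
  (∀ s ∈ S, f s ∈ T) ∧
  (∀ A : Set X, A ⊆ S → DConn κ A → DConn lam (f '' A)) ∧
  (∀ t ∈ T, ∃ s ∈ S, f s = t) ∧
  (∀ y : Y, DConn κ (S ∩ f ⁻¹' {y})) ∧
  ∀ y₀ y₁ : Y, y₀ ∈ T → y₁ ∈ T → lam y₀ y₁ → DConn κ (S ∩ f ⁻¹' {y₀, y₁})

/-- The `c₁`-adjacency on ℤ. -/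
def c1 : ℤ → ℤ → Prop := fun a b => |a - b| = 1

private lemma reach_aux {X : Type*} {κ : X → X → Prop} {r : X} (f : X → ℤ)
    (hstep : ∀ u v, κ u v → |f u - f v| ≤ 1) :
    ∀ x, Relation.ReflTransGen
        (fun u v => κ u v ∧ u ∈ (Set.univ : Set X) ∧ v ∈ (Set.univ : Set X)) x r →
      f r + 1 ≤ f x →
      ∃ z, f z = f r + 1 ∧
        Relation.ReflTransGen (fun u v => κ u v ∧ u ≠ r ∧ v ≠ r) x z := by
  intro x hpath
  induction hpath using Relation.ReflTransGen.head_induction_on with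
  | refl => intro h; omega
  | @head u v h hp ih =>
    intro hge
    obtain ⟨hk, -, -⟩ := h
    by_cases hu : f u = f r + 1
    · exact ⟨u, hu, Relation.ReflTransGen.refl⟩
    · have hd := abs_le.mp (hstep u v hk)
      have hv : f r + 1 ≤ f v := by omega
      obtain ⟨z, hz, hpz⟩ := ih hv
      have hur : u ≠ r := fun e => by rw [e] at hge; omega
      have hvr : v ≠ r := fun e => by rw [e] at hv; omega
      exact ⟨z, hz, hpz.head ⟨hk, hur, hvr⟩⟩

theorem shy_constant_off_two_components {X : Type*}
    (κ : X → X → Prop) (hκs : Symmetric κ) (hκi : Irreflexive κ)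
    (hconn : DConn κ Set.univ) (r : X)
    (hdis : ¬ DConn κ {x | x ≠ r})
    (Y : Set ℤ) (f : X → ℤ)
    (hshy : DShyOn κ c1 f Set.univ Y) :
    ∃ a b : X, ∀ x : X, x ≠ r →
      ¬ Relation.ReflTransGen (fun u v => κ u v ∧ u ≠ r ∧ v ≠ r) x a →
      ¬ Relation.ReflTransGen (fun u v => κ u v ∧ u ≠ r ∧ v ≠ r) x b →
      f x = f r := by
  set R : X → X → Prop := fun u v => κ u v ∧ u ≠ r ∧ v ≠ r with hR
  -- continuity: adjacent points have values differing by at most 1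
  have hstep : ∀ u v, κ u v → |f u - f v| ≤ 1 := by
    intro u v hk
    have hA : DConn κ ({u, v} : Set X) := by
      intro a ha b hb
      have huv : Relation.ReflTransGen
          (fun p q => κ p q ∧ p ∈ ({u, v} : Set X) ∧ q ∈ ({u, v} : Set X)) u v :=
        Relation.ReflTransGen.single ⟨hk, by simp, by simp⟩
      have hvu : Relation.ReflTransGen
          (fun p q => κ p q ∧ p ∈ ({u, v} : Set X) ∧ q ∈ ({u, v} : Set X)) v u :=
        Relation.ReflTransGen.single ⟨hκs hk, by simp, by simp⟩
      simp only [Set.mem_insert_iff, Set.mem_singleton_iff] at ha hb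
      rcases ha with rfl | rfl <;> rcases hb with rfl | rfl
      · exact Relation.ReflTransGen.refl
      · exact huv
      · exact hvu
      · exact Relation.ReflTransGen.refl
    have him := hshy.2.1 {u, v} (fun _ _ => trivial) hA
    have h1 := him (f u) ⟨u, by simp, rfl⟩ (f v) ⟨v, by simp, rfl⟩
    rcases h1.cases_head with heq | ⟨p, ⟨hc1, -, hpmem⟩, -⟩
    · rw [heq]; simp
    · obtain ⟨w, hw, rfl⟩ := hpmem
      simp only [Set.mem_insert_iff, Set.mem_singleton_iff] at hw
      rcases hw with rfl | rfl
      · exfalso; simp only [c1, sub_self, abs_zero] at hc1; omega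
      · unfold c1 at hc1; omega
  have hstep' : ∀ u v, κ u v → |(-f u) - (-f v)| ≤ 1 := by
    intro u v hk
    have := hstep u v hk
    rw [show (-f u) - (-f v) = -(f u - f v) by ring, abs_neg]
    exact this
  -- points with value above f r reach a point of value f r + 1 within X \ {r}
  have hreachU : ∀ x, f r + 1 ≤ f x →
      ∃ z, f z = f r + 1 ∧ Relation.ReflTransGen R x z := fun x hx =>
    reach_aux f hstep x (hconn x trivial r trivial) hx
  have hreachD : ∀ x, f x ≤ f r - 1 →
      ∃ z, f z = f r - 1 ∧ Relation.ReflTransGen R x z := by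
    intro x hx
    obtain ⟨z, hz, hpz⟩ := reach_aux (fun t => -f t) hstep' x
      (hconn x trivial r trivial) (show -f r + 1 ≤ -f x by omega)
    exact ⟨z, by omega, hpz⟩
  -- two points with the same value ≠ f r are connected within X \ {r}
  have hsame : ∀ z w, f z = f w → f z ≠ f r → Relation.ReflTransGen R z w := by
    intro z w hzw hne
    have h := hshy.2.2.2.1 (f z) z ⟨trivial, rfl⟩ w ⟨trivial, hzw.symm⟩
    refine Relation.ReflTransGen.mono ?_ _ _ h
    rintro u v ⟨hk, ⟨-, hu⟩, ⟨-, hv⟩⟩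
    refine ⟨hk, ?_, ?_⟩
    · rintro rfl; exact hne (by simpa using hu.symm)
    · rintro rfl; exact hne (by simpa using hv.symm)
  have Rsymm : Symmetric R := fun u v ⟨hk, hu, hv⟩ => ⟨hκs hk, hv, hu⟩
  have rtgsymm : ∀ {u v}, Relation.ReflTransGen R u v → Relation.ReflTransGen R v u :=
    fun h => by
      haveI : Std.Symm R := ⟨fun _ _ hab => Rsymm hab⟩
      exact Std.Symm.symm _ _ h
  obtain ⟨a, ha⟩ : ∃ a : X, (∃ p, f r < f p) → f r < f a := by
    by_cases h : ∃ p, f r < f p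
    · obtain ⟨p, hp⟩ := h; exact ⟨p, fun _ => hp⟩
    · exact ⟨r, fun h' => absurd h' h⟩
  obtain ⟨b, hb⟩ : ∃ b : X, (∃ p, f p < f r) → f b < f r := by
    by_cases h : ∃ p, f p < f r
    · obtain ⟨p, hp⟩ := h; exact ⟨p, fun _ => hp⟩
    · exact ⟨r, fun h' => absurd h' h⟩
  refine ⟨a, b, ?_⟩
  intro x hxr hna hnb
  by_contra hne
  rcases lt_or_gt_of_ne hne with hlt | hgt
  · -- f x < f r : x is connected to b
    have hb' : f b < f r := hb ⟨x, hlt⟩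
    obtain ⟨zx, hzx, pzx⟩ := hreachD x (by omega)
    obtain ⟨zb, hzb, pzb⟩ := hreachD b (by omega)
    have hmid : Relation.ReflTransGen R zx zb :=
      hsame zx zb (by omega) (by omega)
    exact hnb ((pzx.trans hmid).trans (rtgsymm pzb))
  · -- f x > f r : x is connected to a
    have ha' : f r < f a := ha ⟨x, hgt⟩
    obtain ⟨zx, hzx, pzx⟩ := hreachU x (by omega)
    obtain ⟨za, hza, pza⟩ := hreachU a (by omega)
    have hmid : Relation.ReflTransGen R zx za :=
      hsame zx za (by omega) (by omega)
    exact hna ((pzx.trans hmid).trans (rtgsymm pza))
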